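/- The maximal dimension of a B-orbit B·π_< in {M² = 0} ∩ (strictly upper triangular N×N matrices) is ⌊N²/4⌋, and it is achieved exactly when the involution π has no crossings and at most one fixed point. -/

import Mathlib

/- STATEMENT 12: the maximal dimension of a B-orbit B·π_< in {M²=0} ∩ (strict
upper triangular matrices) is ⌊N²/4⌋, achieved exactly for involutions with no
crossings and at most one fixed point.  By the dimension formula
dim B·π_< = a(N-a) - c, this is the combinatorial statement below. -/

noncomputable section

def numArches {N : ℕ} (π : Equiv.Perm (Fin N)) : ℕ :=
  (Finset.univ.filter fun i : Fin N => π i ≠ i).card / 2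

def numCrossings {N : ℕ} (π : Equiv.Perm (Fin N)) : ℕ :=
  (Finset.univ.filter fun p : Fin N × Fin N =>
      p.1 < π p.1 ∧ p.2 < π p.2 ∧ p.1 < p.2 ∧ p.2 < π p.1 ∧ π p.1 < π p.2).card
  + (Finset.univ.filter fun p : Fin N × Fin N =>
      p.1 < π p.1 ∧ π p.2 = p.2 ∧ p.1 < p.2 ∧ p.2 < π p.1).card

/-- The orbit dimension `a(N-a) - c` of an involution. -/
def orbDim {N : ℕ} (π : Equiv.Perm (Fin N)) : ℕ :=
  numArches π * (N - numArches π) - numCrossings π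

/-- Value-level function for the adjacent-pairs involution. -/
def gAux (N v : ℕ) : ℕ :=
  if v % 2 = 0 ∧ v + 1 < N then v + 1 else if v % 2 = 1 then v - 1 else v

lemma gAux_lt (N v : ℕ) (h : v < N) : gAux N v < N := by
  unfold gAux; split_ifs <;> omega

lemma gAux_inv (N v : ℕ) (h : v < N) : gAux N (gAux N v) = v := by
  unfold gAux; split_ifs <;> omega

lemma gAux_le (N v : ℕ) : gAux N v ≤ v + 1 := by
  unfold gAux; split_ifs <;> omega

lemma gAux_fix (N v : ℕ) (h : v < N) : gAux N v = v ↔ (v + 1 = N ∧ N % 2 = 1) := by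
  unfold gAux; split_ifs <;> omega

/-- The adjacent-pairs involution `(0 1)(2 3)⋯`. -/
def pairPerm (N : ℕ) : Equiv.Perm (Fin N) :=
  Function.Involutive.toPerm (fun x => ⟨gAux N x.val, gAux_lt N _ x.isLt⟩)
    (fun x => Fin.ext (gAux_inv N _ x.isLt))

lemma pairPerm_val (N : ℕ) (x : Fin N) : (pairPerm N x).val = gAux N x.val := rfl

lemma pairPerm_invol (N : ℕ) : ∀ x, pairPerm N (pairPerm N x) = x :=
  fun x => Fin.ext (gAux_inv N _ x.isLt)

lemma quad_div (a k : ℕ) : (2*a+k)^2/4 = a*(a+k) + k^2/4 := by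
  have h : (2*a+k)^2 = 4*(a*(a+k)) + k^2 := by ring
  rw [h, Nat.mul_add_div (by norm_num)]

lemma key_lemma (N a : ℕ) (h : 2*a ≤ N) :
    a*(N-a) ≤ N^2/4 ∧ (a*(N-a) = N^2/4 ↔ N - 2*a ≤ 1) := by
  set k := N - 2*a with hk
  have hN : N = 2*a + k := by omega
  have hd : N^2/4 = a*(a+k) + k^2/4 := by rw [hN]; exact quad_div a k
  have hna : N - a = a + k := by omega
  have h1 : k ≤ 1 → k^2 ≤ 1 := by intro hh; nlinarith
  have h2 : 2 ≤ k → 4 ≤ k^2 := by intro hh; nlinarith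
  rw [hna, hd]
  constructor
  · omega
  · omega

lemma arches_le (N : ℕ) (π : Equiv.Perm (Fin N)) : 2 * numArches π ≤ N := by
  have h1 : (Finset.univ.filter fun i : Fin N => π i ≠ i).card ≤ N := by
    calc (Finset.univ.filter fun i : Fin N => π i ≠ i).card
        ≤ (Finset.univ : Finset (Fin N)).card := Finset.card_filter_le _ _
      _ = N := by simp
  unfold numArches; omega

lemma crossings_zero_small (N : ℕ) (h : N ≤ 1) (π : Equiv.Perm (Fin N)) :
    numCrossings π = 0 := by
  unfold numCrossings
  have e1 : (Finset.univ.filter fun p : Fin N × Fin N =>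
      p.1 < π p.1 ∧ p.2 < π p.2 ∧ p.1 < p.2 ∧ p.2 < π p.1 ∧ π p.1 < π p.2) = ∅ := by
    apply Finset.filter_eq_empty_iff.mpr
    rintro p - ⟨-, -, h3, -, -⟩
    have := p.1.isLt; have := p.2.isLt
    rw [Fin.lt_def] at h3; omega
  have e2 : (Finset.univ.filter fun p : Fin N × Fin N =>
      p.1 < π p.1 ∧ π p.2 = p.2 ∧ p.1 < p.2 ∧ p.2 < π p.1) = ∅ := by
    apply Finset.filter_eq_empty_iff.mpr
    rintro p - ⟨-, -, h3, -⟩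
    have := p.1.isLt; have := p.2.isLt
    rw [Fin.lt_def] at h3; omega
  rw [e1, e2]; simp

lemma pair_crossings (N : ℕ) : numCrossings (pairPerm N) = 0 := by
  unfold numCrossings
  have e1 : (Finset.univ.filter fun p : Fin N × Fin N =>
      p.1 < pairPerm N p.1 ∧ p.2 < pairPerm N p.2 ∧ p.1 < p.2 ∧
        p.2 < pairPerm N p.1 ∧ pairPerm N p.1 < pairPerm N p.2) = ∅ := by
    apply Finset.filter_eq_empty_iff.mpr
    rintro p - ⟨h1, -, h3, h4, -⟩
    simp only [Fin.lt_def, pairPerm_val] at h1 h3 h4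
    have := gAux_le N p.1.val; omega
  have e2 : (Finset.univ.filter fun p : Fin N × Fin N =>
      p.1 < pairPerm N p.1 ∧ pairPerm N p.2 = p.2 ∧ p.1 < p.2 ∧
        p.2 < pairPerm N p.1) = ∅ := by
    apply Finset.filter_eq_empty_iff.mpr
    rintro p - ⟨h1, -, h3, h4⟩
    simp only [Fin.lt_def, pairPerm_val] at h1 h3 h4
    have := gAux_le N p.1.val; omega
  rw [e1, e2]; simp

lemma pair_arches (N : ℕ) : numArches (pairPerm N) = N / 2 := by
  have hfix : ∀ x : Fin N, pairPerm N x = x ↔ (x.val + 1 = N ∧ N % 2 = 1) := by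
    intro x
    rw [Fin.ext_iff, pairPerm_val]
    exact gAux_fix N x.val x.isLt
  have hcard : (Finset.univ.filter fun i : Fin N => pairPerm N i = i).card = N % 2 := by
    by_cases hN : N % 2 = 1
    · have hN1 : 1 ≤ N := by omega
      have hs : (Finset.univ.filter fun i : Fin N => pairPerm N i = i)
          = {⟨N-1, by omega⟩} := by
        apply Finset.eq_singleton_iff_unique_mem.mpr
        constructor
        · rw [Finset.mem_filter]
          refine ⟨Finset.mem_univ _, (hfix _).mpr ⟨?_, hN⟩⟩
          show N - 1 + 1 = N
          omega
        · intro x hx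
          rw [Finset.mem_filter] at hx
          have h1 := (hfix x).mp hx.2
          apply Fin.ext
          show x.val = N - 1
          omega
      rw [hs, Finset.card_singleton]; omega
    · have hs : (Finset.univ.filter fun i : Fin N => pairPerm N i = i) = ∅ := by
        apply Finset.filter_eq_empty_iff.mpr
        intro x _
        rw [hfix x]; omega
      rw [hs, Finset.card_empty]; omega
  have htot := Finset.card_filter_add_card_filter_not
    (s := (Finset.univ : Finset (Fin N))) (p := fun i : Fin N => pairPerm N i = i)
  simp only [Finset.card_univ, Fintype.card_fin] at htot
  unfold numArches
  have : (Finset.univ.filter fun i : Fin N => pairPerm N i ≠ i).card = N - N % 2 := by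
    simp only [ne_eq]
    omega
  rw [this]
  omega

theorem max_orbit_dimension (N : ℕ) :
    (∀ π : Equiv.Perm (Fin N), (∀ x, π (π x) = x) → orbDim π ≤ N^2 / 4) ∧
    (∀ π : Equiv.Perm (Fin N), (∀ x, π (π x) = x) →
      (orbDim π = N^2 / 4 ↔ (numCrossings π = 0 ∧ N - 2 * numArches π ≤ 1))) ∧
    (∃ π : Equiv.Perm (Fin N), (∀ x, π (π x) = x) ∧ orbDim π = N^2 / 4) := by
  refine ⟨?_, ?_, ?_⟩
  · intro π _
    have h := (key_lemma N (numArches π) (arches_le N π)).1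
    unfold orbDim
    exact le_trans (Nat.sub_le _ _) h
  · intro π _
    have hle := (key_lemma N (numArches π) (arches_le N π)).1
    have hiff := (key_lemma N (numArches π) (arches_le N π)).2
    unfold orbDim
    constructor
    · intro h
      by_cases hc : numCrossings π ≤ numArches π * (N - numArches π)
      · have heq : numArches π * (N - numArches π) = N^2/4 := by omega
        have hc0 : numCrossings π = 0 := by omega
        exact ⟨hc0, hiff.mp heq⟩
      · -- then orbDim = 0 = N^2/4, so N ≤ 1, so numCrossings = 0, contradiction
        have h0 : N^2/4 = 0 := by omega
        have hN1 : N ≤ 1 := by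
          by_contra hN
          have : 4 ≤ N^2 := by nlinarith
          omega
        have := crossings_zero_small N hN1 π
        omega
    · rintro ⟨hc, hk⟩
      rw [hc, Nat.sub_zero]
      exact hiff.mpr hk
  · refine ⟨pairPerm N, pairPerm_invol N, ?_⟩
    unfold orbDim
    rw [pair_crossings, pair_arches, Nat.sub_zero]
    have h2 : 2 * (N / 2) ≤ N := by omega
    exact (key_lemma N (N/2) h2).2.mpr (by omega)

end
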